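/- Let N ≥ 2 be an integer. Then along the infinitesimal Moser sequence w_j one has I_1(w_j) = ∫₀¹ exp( log(e/s) · w_j(s)^N / s^{N−1} ) ds → 1 = I_1(0) as j → ∞; i.e. the critical Limiting-Bliss functional I_1 is continuous along the infinitesimal Moser sequence, which converges weakly to 0. -/

import Mathlib

open MeasureTheory Real Set Filter

/-- The Limiting-Bliss functional `I_β`. -/
noncomputable def Ifun (N : ℕ) (β : ℝ) (v : ℝ → ℝ) : ℝ :=
  ∫ s in Set.Ioc (0:ℝ) 1,
    Real.exp (β * Real.log (Real.exp 1 / s) * (v s ^ N / s ^ (N - 1)))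

/-- The infinitesimal Moser sequence `w_j`. -/
noncomputable def moser (N j : ℕ) (t : ℝ) : ℝ :=
  if t ≤ 1 / (j : ℝ) then (j : ℝ) ^ ((1:ℝ) / N) * t
  else (j : ℝ) ^ (-(((N:ℝ) - 1) / N))

/-- The integrand of `Ifun N 1 (moser N j)`. -/
noncomputable def Fm (N j : ℕ) (s : ℝ) : ℝ :=
  Real.exp (Real.log (Real.exp 1 / s) * (moser N j s ^ N / s ^ (N - 1)))

lemma Ifun_moser_eq (N j : ℕ) :
    Ifun N 1 (moser N j) = ∫ s in Set.Ioc (0:ℝ) 1, Fm N j s := by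
  simp [Ifun, Fm]

lemma moser_nonneg (N j : ℕ) {t : ℝ} (ht : 0 ≤ t) : 0 ≤ moser N j t := by
  unfold moser; split_ifs
  · exact mul_nonneg (Real.rpow_nonneg (Nat.cast_nonneg j) _) ht
  · exact Real.rpow_nonneg (Nat.cast_nonneg j) _

lemma measurable_moser (N j : ℕ) : Measurable (moser N j) := by
  unfold moser
  exact Measurable.ite (measurableSet_le measurable_id measurable_const)
    (measurable_id.const_mul _) measurable_const

lemma measurable_Fm (N j : ℕ) : Measurable (Fm N j) := by
  apply Real.measurable_exp.comp
  apply Measurable.mul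
  · exact Real.measurable_log.comp (measurable_const.div measurable_id)
  · exact (((measurable_moser N j).pow_const N)).div (measurable_id.pow_const (N-1))

lemma log_es {s : ℝ} (hs : 0 < s) : Real.log (Real.exp 1 / s) = 1 - Real.log s := by
  rw [Real.log_div (Real.exp_ne_zero 1) hs.ne', Real.log_exp]

lemma c_inner (N j : ℕ) (hN : 2 ≤ N) {s : ℝ} (hs : 0 < s) (hsj : s ≤ 1/(j:ℝ)) :
    moser N j s ^ N / s ^ (N-1) = (j:ℝ) * s := by
  have hNr : ((N:ℝ)) ≠ 0 := by
    have : 0 < N := by omega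
    exact_mod_cast this.ne'
  have hpow : moser N j s ^ N = (j:ℝ) * s ^ N := by
    rw [moser, if_pos hsj, mul_pow]
    congr 1
    rw [← Real.rpow_natCast ((j:ℝ) ^ ((1:ℝ)/N)) N, ← Real.rpow_mul (Nat.cast_nonneg j),
      one_div, inv_mul_cancel₀ hNr, Real.rpow_one]
  have h1 : s ^ N = s ^ (N-1) * s := by
    rw [← pow_succ]; congr 1; omega
  have hpne : s ^ (N-1) ≠ 0 := pow_ne_zero _ hs.ne'
  rw [hpow, h1, show (j:ℝ) * (s ^ (N - 1) * s) = s ^ (N-1) * ((j:ℝ) * s) by ring,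
    mul_div_cancel_left₀ _ hpne]

lemma c_outer (N j : ℕ) (hN : 2 ≤ N) {s : ℝ} (hsj : ¬ s ≤ 1/(j:ℝ)) :
    moser N j s ^ N / s ^ (N-1) = (((j:ℝ) * s) ^ (N-1))⁻¹ := by
  have hNr : ((N:ℝ)) ≠ 0 := by
    have : 0 < N := by omega
    exact_mod_cast this.ne'
  have hcast : ((N - 1 : ℕ) : ℝ) = (N:ℝ) - 1 := by
    have h1 : 1 ≤ N := by omega
    push_cast [h1]
    ring
  rw [moser, if_neg hsj, ← Real.rpow_natCast ((j:ℝ) ^ (-(((N:ℝ)-1)/N))) N,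
    ← Real.rpow_mul (Nat.cast_nonneg j),
    show (-(((N:ℝ)-1)/N)) * N = -((N:ℝ)-1) by field_simp,
    ← hcast, Real.rpow_neg (Nat.cast_nonneg j), Real.rpow_natCast,
    mul_pow, mul_inv, div_eq_mul_inv]

lemma Fm_ge_one (N j : ℕ) {s : ℝ} (hs : 0 < s) (hs1 : s ≤ 1) : 1 ≤ Fm N j s := by
  rw [Fm]
  apply Real.one_le_exp
  apply mul_nonneg
  · rw [log_es hs]
    have := Real.log_nonpos hs.le hs1
    linarith
  · exact div_nonneg (pow_nonneg (moser_nonneg N j hs.le) _) (pow_nonneg hs.le _)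

lemma Fm_le_inner (N j : ℕ) (hN : 2 ≤ N) (hj : 1 ≤ j) {s : ℝ} (hs : 0 < s)
    (hsj : s ≤ 1/(j:ℝ)) : Fm N j s ≤ Real.exp (2 + Real.log j * ((j:ℝ) * s)) := by
  have hj0 : (0:ℝ) < j := by exact_mod_cast (by omega : 0 < j)
  rw [Fm, c_inner N j hN hs hsj, log_es hs]
  apply Real.exp_le_exp.2
  have hu0 : 0 < (j:ℝ) * s := by positivity
  have hu1 : (j:ℝ) * s ≤ 1 := by
    have := (le_div_iff₀ hj0).mp hsj
    linarith [this]
  have hlogmul : Real.log ((j:ℝ) * s) = Real.log j + Real.log s :=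
    Real.log_mul hj0.ne' hs.ne'
  have hkey : ((j:ℝ)*s) * (-Real.log ((j:ℝ)*s)) ≤ 1 - (j:ℝ)*s := by
    have h := Real.log_le_sub_one_of_pos (show (0:ℝ) < ((j:ℝ)*s)⁻¹ by positivity)
    rw [Real.log_inv] at h
    have := mul_le_mul_of_nonneg_left h hu0.le
    have hinv : ((j:ℝ)*s) * (((j:ℝ)*s)⁻¹ - 1) = 1 - (j:ℝ)*s := by
      field_simp
    linarith [hinv ▸ this]
  have hls : Real.log s = Real.log ((j:ℝ)*s) - Real.log j := by rw [hlogmul]; ring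
  rw [hls]
  nlinarith [hkey, hu1, hu0]

lemma Fm_le_outer (N j : ℕ) (hN : 2 ≤ N) (hj : 1 ≤ j) {s : ℝ} (hs : 0 < s) (hs1 : s ≤ 1)
    (hsj : ¬ s ≤ 1/(j:ℝ)) : Fm N j s ≤ Real.exp ((1 + Real.log j) / ((j:ℝ) * s)) := by
  have hj0 : (0:ℝ) < j := by exact_mod_cast (by omega : 0 < j)
  have hj1 : (1:ℝ) ≤ j := by exact_mod_cast hj
  push_neg at hsj
  have hu1 : 1 ≤ (j:ℝ) * s := by
    have := (div_lt_iff₀ hj0).mp hsj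
    nlinarith [this]
  rw [Fm, c_outer N j hN (by push_neg; exact hsj), log_es hs]
  apply Real.exp_le_exp.2
  have h1 : 1 - Real.log s ≤ 1 + Real.log j := by
    have hinv : (j:ℝ)⁻¹ ≤ s := by
      rw [← one_div]; exact hsj.le
    have := Real.log_le_log (by positivity) hinv
    rw [Real.log_inv] at this
    linarith
  have h2 : ((((j:ℝ) * s)) ^ (N-1))⁻¹ ≤ ((j:ℝ) * s)⁻¹ := by
    apply inv_anti₀ (by linarith)
    calc (j:ℝ) * s = ((j:ℝ) * s) ^ 1 := (pow_one _).symm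
    _ ≤ ((j:ℝ) * s) ^ (N-1) := pow_le_pow_right₀ hu1 (by omega)
  calc (1 - Real.log s) * ((((j:ℝ) * s)) ^ (N-1))⁻¹
      ≤ (1 + Real.log j) * ((j:ℝ) * s)⁻¹ := by
        apply mul_le_mul h1 h2 (by positivity)
        have := Real.log_nonneg hj1
        linarith
  _ = (1 + Real.log j) / ((j:ℝ) * s) := (div_eq_mul_inv _ _).symm

lemma Fm_le_const (N j : ℕ) (hN : 2 ≤ N) (hj : 1 ≤ j) {s : ℝ} (hs : s ∈ Set.Ioc (0:ℝ) 1) :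
    Fm N j s ≤ Real.exp (2 + Real.log j) := by
  obtain ⟨hs0, hs1⟩ := hs
  have hj0 : (0:ℝ) < j := by exact_mod_cast (by omega : 0 < j)
  have hL : 0 ≤ Real.log j := Real.log_nonneg (by exact_mod_cast hj)
  by_cases h : s ≤ 1/(j:ℝ)
  · refine (Fm_le_inner N j hN hj hs0 h).trans (Real.exp_le_exp.2 ?_)
    have hu1 : (j:ℝ) * s ≤ 1 := by
      have := (le_div_iff₀ hj0).mp h
      linarith [this]
    nlinarith
  · refine (Fm_le_outer N j hN hj hs0 hs1 h).trans (Real.exp_le_exp.2 ?_)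
    push_neg at h
    have hu1 : 1 ≤ (j:ℝ) * s := by
      have := (div_lt_iff₀ hj0).mp h
      nlinarith [this]
    have := div_le_self (by linarith : (0:ℝ) ≤ 1 + Real.log j) hu1
    linarith

lemma integrableOn_Fm (N j : ℕ) (hN : 2 ≤ N) (hj : 1 ≤ j) :
    IntegrableOn (Fm N j) (Set.Ioc (0:ℝ) 1) := by
  apply Integrable.mono' (g := fun _ => Real.exp (2 + Real.log j))
    (integrableOn_const measure_Ioc_lt_top.ne)
    (measurable_Fm N j).aestronglyMeasurable.restrict
  refine (ae_restrict_iff' measurableSet_Ioc).2 (ae_of_all _ fun s hs => ?_)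
  have hpos : 0 < Fm N j s := by rw [Fm]; exact Real.exp_pos _
  rw [Real.norm_eq_abs, abs_of_pos hpos]
  exact Fm_le_const N j hN hj hs

lemma split_integral {f : ℝ → ℝ} {a b c : ℝ} (hab : a ≤ b) (hbc : b ≤ c)
    (hf : IntegrableOn f (Set.Ioc a c)) :
    ∫ s in Set.Ioc a c, f s = (∫ s in Set.Ioc a b, f s) + ∫ s in Set.Ioc b c, f s := by
  have h1 : IntegrableOn f (Set.Ioc a b) := hf.mono_set (Set.Ioc_subset_Ioc_right hbc)
  have h2 : IntegrableOn f (Set.Ioc b c) := hf.mono_set (Set.Ioc_subset_Ioc_left hab)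
  rw [← setIntegral_union (Set.Ioc_disjoint_Ioc_of_le le_rfl) measurableSet_Ioc h1 h2,
    Set.Ioc_union_Ioc_eq_Ioc hab hbc]

lemma exp_linear_integral (a b p q : ℝ) (hp : p ≠ 0) :
    ∫ x in a..b, Real.exp (p*x+q) = (Real.exp (p*b+q) - Real.exp (p*a+q))/p := by
  rw [intervalIntegral.integral_comp_mul_add Real.exp hp q, integral_exp]
  rw [smul_eq_mul]; field_simp

lemma piece_const {f : ℝ → ℝ} {a b C : ℝ} (hab : a ≤ b) (hf : IntegrableOn f (Set.Ioc a b))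
    (h : ∀ s ∈ Set.Ioc a b, f s ≤ C) : ∫ s in Set.Ioc a b, f s ≤ (b - a) * C := by
  calc ∫ s in Set.Ioc a b, f s ≤ ∫ _ in Set.Ioc a b, C :=
        setIntegral_mono_on hf (integrableOn_const measure_Ioc_lt_top.ne)
          measurableSet_Ioc h
  _ = (b-a) * C := by
      rw [setIntegral_const, measureReal_def, Real.volume_Ioc, smul_eq_mul, ENNReal.toReal_ofReal (by linarith)]

lemma piece_exp {f : ℝ → ℝ} {a b p q : ℝ} (hab : a ≤ b) (hp : p ≠ 0)
    (hf : IntegrableOn f (Set.Ioc a b))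
    (h : ∀ s ∈ Set.Ioc a b, f s ≤ Real.exp (p*s+q)) :
    ∫ s in Set.Ioc a b, f s ≤ (Real.exp (p*b+q) - Real.exp (p*a+q))/p := by
  have hcont : Continuous fun s : ℝ => Real.exp (p*s+q) := by fun_prop
  calc ∫ s in Set.Ioc a b, f s ≤ ∫ s in Set.Ioc a b, Real.exp (p*s+q) :=
        setIntegral_mono_on hf (hcont.integrableOn_Ioc) measurableSet_Ioc h
  _ = ∫ s in a..b, Real.exp (p*s+q) := (intervalIntegral.integral_of_le hab).symm
  _ = (Real.exp (p*b+q) - Real.exp (p*a+q))/p := exp_linear_integral a b p q hp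

lemma log_ge_one {j : ℕ} (hj : 3 ≤ j) : 1 ≤ Real.log j := by
  have h3 : (3:ℝ) ≤ j := by exact_mod_cast hj
  have he := Real.exp_one_lt_d9
  calc (1:ℝ) = Real.log (Real.exp 1) := (Real.log_exp 1).symm
  _ ≤ Real.log j := Real.log_le_log (Real.exp_pos 1) (by linarith)

lemma main_lower (N j : ℕ) (hN : 2 ≤ N) (hj : 1 ≤ j) : 1 ≤ Ifun N 1 (moser N j) := by
  rw [Ifun_moser_eq]
  have h1 : (1:ℝ) = ∫ _ in Set.Ioc (0:ℝ) 1, (1:ℝ) := by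
    rw [setIntegral_const, measureReal_def, Real.volume_Ioc, smul_eq_mul]
    norm_num
  refine le_trans (le_of_eq h1) ?_
  exact setIntegral_mono_on (integrableOn_const measure_Ioc_lt_top.ne)
    (integrableOn_Fm N j hN hj) measurableSet_Ioc (fun s hs => Fm_ge_one N j hs.1 hs.2)

set_option maxHeartbeats 2000000 in
lemma main_upper (N j : ℕ) (hN : 2 ≤ N) (hj : 3 ≤ j) (hMj : (1 + Real.log j)^2 ≤ j) :
    Ifun N 1 (moser N j) ≤ Real.exp 2 / Real.log j + 2 * Real.exp 1 / (1 + Real.log j)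
      + (1 + Real.log j)^2 / j * Real.exp ((1 + Real.log j)/2)
      + Real.exp (1/(1 + Real.log j)) := by
  have hj1 : 1 ≤ j := by omega
  have hj0 : (0:ℝ) < j := by exact_mod_cast (by omega : 0 < j)
  set L := Real.log j with hLdef
  set M := 1 + L with hMdef
  have hL1 : 1 ≤ L := log_ge_one hj
  have hM2 : 2 ≤ M := by simp [hMdef]; linarith
  have hM0 : 0 < M := by linarith
  have hexpL : Real.exp L = j := Real.exp_log hj0
  have hLpos : 0 < L := by linarith
  have hexpM : Real.exp M = Real.exp 1 * j := by
    rw [hMdef, Real.exp_add, hexpL]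
  have h1j : (0:ℝ) < 1/j := by positivity
  have h0a : (0:ℝ) ≤ 1/j := h1j.le
  have hab : 1/(j:ℝ) ≤ 2/j := by gcongr <;> norm_num
  have hbc : 2/(j:ℝ) ≤ M^2/j := by gcongr; nlinarith
  have hc1 : M^2/(j:ℝ) ≤ 1 := by rw [div_le_one hj0]; exact hMj
  have h2j1 : 2/(j:ℝ) ≤ 1 := le_trans hbc hc1
  have hInt := integrableOn_Fm N j hN hj1
  have hI01 : IntegrableOn (Fm N j) (Set.Ioc (0:ℝ) (2/j)) :=
    hInt.mono_set (Set.Ioc_subset_Ioc_right h2j1)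
  have hI2 : IntegrableOn (Fm N j) (Set.Ioc (2/(j:ℝ)) 1) :=
    hInt.mono_set (Set.Ioc_subset_Ioc_left (by positivity))
  rw [Ifun_moser_eq, split_integral (by positivity) h2j1 hInt, split_integral h0a hab hI01,
    split_integral hbc hc1 hI2]
  -- Piece 1 : (0, 1/j]
  have P1 : ∫ s in Set.Ioc (0:ℝ) (1/j), Fm N j s ≤ Real.exp 2 / L := by
    have hp : L * (j:ℝ) ≠ 0 := ne_of_gt (mul_pos hLpos hj0)
    have hb := piece_exp (p := L*j) (q := 2) h0a hp
      (hI01.mono_set (Set.Ioc_subset_Ioc_right hab))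
      (fun s hs => by
        refine (Fm_le_inner N j hN hj1 hs.1 hs.2).trans (le_of_eq ?_)
        congr 1; ring)
    refine hb.trans ?_
    have he1 : L*(j:ℝ)*(1/j)+2 = L + 2 := by field_simp
    have he0 : L*(j:ℝ)*0+2 = 2 := by ring
    rw [he1, he0, Real.exp_add, hexpL]
    rw [div_le_div_iff₀ (mul_pos hLpos hj0) hLpos]
    nlinarith [mul_pos (Real.exp_pos 2) hLpos]
  -- Piece 2 : (1/j, 2/j]
  have hMj2 : 0 < M*(j:ℝ)/2 := by nlinarith [mul_pos hM0 hj0]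
  have P2 : ∫ s in Set.Ioc (1/(j:ℝ)) (2/j), Fm N j s ≤ 2 * Real.exp 1 / M := by
    have hp : -(M*(j:ℝ)/2) ≠ 0 := ne_of_lt (by linarith)
    have hb := piece_exp (p := -(M*(j:ℝ)/2)) (q := 3*M/2) hab hp
      (hI01.mono_set (Set.Ioc_subset_Ioc_left h0a))
      (fun s hs => by
        obtain ⟨hs1, hs2⟩ := hs
        have hs0 : 0 < s := lt_trans h1j hs1
        have hns : ¬ s ≤ 1/(j:ℝ) := not_le.2 hs1
        refine (Fm_le_outer N j hN hj1 hs0 (le_trans hs2 h2j1) hns).trans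
          (Real.exp_le_exp.2 ?_)
        have ht0 : 0 < (j:ℝ)*s := by positivity
        have ht1 : 1 < (j:ℝ)*s := by nlinarith [(div_lt_iff₀ hj0).mp hs1]
        have ht2 : (j:ℝ)*s ≤ 2 := by nlinarith [(le_div_iff₀ hj0).mp hs2]
        have hchord : 1/((j:ℝ)*s) ≤ (3 - (j:ℝ)*s)/2 := by
          rw [div_le_div_iff₀ ht0 two_pos]
          nlinarith [mul_nonneg (sub_nonneg.2 ht1.le) (sub_nonneg.2 ht2)]
        calc M/((j:ℝ)*s) = M * (1/((j:ℝ)*s)) := by ring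
        _ ≤ M * ((3 - (j:ℝ)*s)/2) := mul_le_mul_of_nonneg_left hchord hM0.le
        _ = -(M*(j:ℝ)/2)*s + 3*M/2 := by ring)
    refine hb.trans ?_
    have h1 : -(M*(j:ℝ)/2)*(2/j) + 3*M/2 = M/2 := by field_simp; ring
    have h2 : -(M*(j:ℝ)/2)*(1/j) + 3*M/2 = M := by field_simp; ring
    rw [h1, h2]
    have hrw : (Real.exp (M/2) - Real.exp M)/(-(M*(j:ℝ)/2))
        = (Real.exp M - Real.exp (M/2))/(M*(j:ℝ)/2) := by
      rw [div_neg, ← neg_div, neg_sub]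
    rw [hrw, hexpM, div_le_div_iff₀ hMj2 hM0]
    nlinarith [mul_pos (Real.exp_pos (M/2)) hM0]
  -- Piece 3 : (2/j, M^2/j]
  have P3 : ∫ s in Set.Ioc (2/(j:ℝ)) (M^2/j), Fm N j s ≤ M^2/j * Real.exp (M/2) := by
    have hb := piece_const (C := Real.exp (M/2)) hbc (hI2.mono_set (Set.Ioc_subset_Ioc_right hc1))
      (fun s hs => by
        obtain ⟨hs1, hs2⟩ := hs
        have hs0 : 0 < s := lt_trans (by positivity) hs1
        have hns : ¬ s ≤ 1/(j:ℝ) := not_le.2 (lt_of_le_of_lt hab hs1)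
        refine (Fm_le_outer N j hN hj1 hs0 (le_trans hs2 hc1) hns).trans
          (Real.exp_le_exp.2 ?_)
        have h2t : 2 ≤ (j:ℝ)*s := by nlinarith [(div_lt_iff₀ hj0).mp hs1]
        gcongr)
    refine hb.trans ?_
    have hle : M^2/(j:ℝ) - 2/j ≤ M^2/j := by linarith
    exact mul_le_mul_of_nonneg_right hle (Real.exp_pos _).le
  -- Piece 4 : (M^2/j, 1]
  have P4 : ∫ s in Set.Ioc (M^2/(j:ℝ)) 1, Fm N j s ≤ Real.exp (1/M) := by
    have hb := piece_const (C := Real.exp (1/M)) hc1 (hI2.mono_set (Set.Ioc_subset_Ioc_left hbc))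
      (fun s hs => by
        obtain ⟨hs1, hs2⟩ := hs
        have hs0 : 0 < s := lt_of_le_of_lt (by positivity) hs1
        have hns : ¬ s ≤ 1/(j:ℝ) := not_le.2 (lt_of_le_of_lt (hab.trans hbc) hs1)
        refine (Fm_le_outer N j hN hj1 hs0 hs2 hns).trans (Real.exp_le_exp.2 ?_)
        have hMt : M^2 ≤ (j:ℝ)*s := by nlinarith [(div_lt_iff₀ hj0).mp hs1]
        have hM2pos : 0 < M^2 := by positivity
        calc M/((j:ℝ)*s) ≤ M/M^2 := by gcongr
        _ = 1/M := by rw [sq, ← div_div, div_self hM0.ne'])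
    refine hb.trans ?_
    have hnn : 0 ≤ M^2/(j:ℝ) * Real.exp (1/M) :=
      mul_nonneg (by positivity) (Real.exp_pos _).le
    nlinarith [Real.exp_pos (1/M)]
  linarith

/-- the critical Limiting-Bliss functional `I_1` is continuous along the
infinitesimal Moser sequence: `I_1 (w_j) → 1 = I_1(0)` as `j → ∞`. -/
theorem Ifun_one_moser_tendsto_one (N : ℕ) (hN : 2 ≤ N) :
    Filter.Tendsto (fun j : ℕ => Ifun N 1 (moser N j)) Filter.atTop (nhds 1) ∧
    Ifun N 1 (fun _ => 0) = 1 := by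
  constructor
  · have hlog : Tendsto (fun j:ℕ => Real.log j) atTop atTop :=
      Real.tendsto_log_atTop.comp tendsto_natCast_atTop_atTop
    have hM : Tendsto (fun j:ℕ => 1 + Real.log j) atTop atTop :=
      tendsto_atTop_add_const_left _ 1 hlog
    have t1 : Tendsto (fun j:ℕ => Real.exp 2 / Real.log j) atTop (nhds 0) := by
      have h := hlog.inv_tendsto_atTop.const_mul (Real.exp 2)
      rw [mul_zero] at h
      exact h.congr fun j => (div_eq_mul_inv _ _).symm
    have t2 : Tendsto (fun j:ℕ => 2 * Real.exp 1 / (1 + Real.log j)) atTop (nhds 0) := by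
      have h := hM.inv_tendsto_atTop.const_mul (2 * Real.exp 1)
      rw [mul_zero] at h
      exact h.congr fun j => (div_eq_mul_inv _ _).symm
    have t4 : Tendsto (fun j:ℕ => Real.exp (1/(1 + Real.log j))) atTop (nhds 1) := by
      have h0 : Tendsto (fun j:ℕ => 1/(1 + Real.log j)) atTop (nhds 0) := by
        simpa [one_div, Pi.inv_def] using hM.inv_tendsto_atTop
      have h := (Real.continuous_exp.tendsto 0).comp h0
      simpa [Function.comp_def, Real.exp_zero] using h
    have key : Tendsto (fun y:ℝ => (1+y)^2 * Real.exp ((1+y)/2) * Real.exp (-y))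
        atTop (nhds 0) := by
      have h0 := Real.tendsto_pow_mul_exp_neg_atTop_nhds_zero 0
      have h1 := Real.tendsto_pow_mul_exp_neg_atTop_nhds_zero 1
      have h2 := Real.tendsto_pow_mul_exp_neg_atTop_nhds_zero 2
      have base : Tendsto (fun z:ℝ => (1+2*z)^2 * Real.exp (-z)) atTop (nhds 0) := by
        have H := (h0.add (h1.const_mul 4)).add (h2.const_mul 4)
        norm_num at H
        exact H.congr fun z => by ring
      have hdiv : Tendsto (fun y:ℝ => y/2) atTop atTop :=
        tendsto_id.atTop_div_const two_pos
      have H2 := (base.comp hdiv).const_mul (Real.exp (1/2))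
      rw [mul_zero] at H2
      refine H2.congr fun y => ?_
      simp only [Function.comp]
      have e1 : Real.exp ((1+y)/2) * Real.exp (-y) = Real.exp (1/2) * Real.exp (-(y/2)) := by
        rw [← Real.exp_add, ← Real.exp_add]; congr 1; ring
      calc Real.exp (1/2) * ((1+2*(y/2))^2 * Real.exp (-(y/2)))
          = (1+y)^2 * (Real.exp (1/2) * Real.exp (-(y/2))) := by ring
      _ = (1+y)^2 * (Real.exp ((1+y)/2) * Real.exp (-y)) := by rw [e1]
      _ = (1+y)^2 * Real.exp ((1+y)/2) * Real.exp (-y) := by ring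
    have t3 : Tendsto (fun j:ℕ => (1 + Real.log j)^2 / j * Real.exp ((1 + Real.log j)/2))
        atTop (nhds 0) := by
      refine Tendsto.congr' ?_ (key.comp hlog)
      filter_upwards [eventually_ge_atTop 1] with j hj
      have hj0 : (0:ℝ) < j := by exact_mod_cast (by omega : 0 < j)
      simp only [Function.comp]
      rw [Real.exp_neg, Real.exp_log hj0]
      ring
    have hU : Tendsto (fun j:ℕ => Real.exp 2 / Real.log j + 2 * Real.exp 1 / (1 + Real.log j)
        + (1 + Real.log j)^2 / j * Real.exp ((1 + Real.log j)/2)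
        + Real.exp (1/(1 + Real.log j))) atTop (nhds 1) := by
      have h := ((t1.add t2).add t3).add t4
      norm_num at h
      simpa [one_div] using h
    have hev : ∀ᶠ j:ℕ in atTop, (1 + Real.log j)^2 ≤ j := by
      have hlt := t3.eventually_lt_const (by norm_num : (0:ℝ) < 1)
      filter_upwards [hlt, eventually_ge_atTop 1] with j hj1 hj2
      have hj0 : (0:ℝ) < j := by exact_mod_cast (by omega : 0 < j)
      have hL : 0 ≤ Real.log j := Real.log_nonneg (by exact_mod_cast hj2)
      have hE : 1 ≤ Real.exp ((1 + Real.log j)/2) := Real.one_le_exp (by linarith)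
      have h2 : (1 + Real.log j)^2/j ≤ (1 + Real.log j)^2/j * Real.exp ((1 + Real.log j)/2) :=
        le_mul_of_one_le_right (by positivity) hE
      have h3 : (1 + Real.log j)^2/j < 1 := lt_of_le_of_lt h2 hj1
      rw [div_lt_one hj0] at h3
      exact h3.le
    apply tendsto_of_tendsto_of_tendsto_of_le_of_le' tendsto_const_nhds hU
    · filter_upwards [eventually_ge_atTop 1] with j hj using main_lower N j hN hj
    · filter_upwards [eventually_ge_atTop 3, hev] with j h3 hM2 using main_upper N j hN h3 hM2
  · simp only [Ifun, zero_pow (show N ≠ 0 by omega), zero_div, mul_zero, Real.exp_zero]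
    rw [setIntegral_const, measureReal_def, Real.volume_Ioc, smul_eq_mul]
    norm_num
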